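/- Let Φ : (M₁,Ω₁) → (M₂,Ω₂) be a state-preserving unital completely positive Markov map admitting an adjoint Φ^♯, and assume the contraction U_Φ satisfies J₂ U_Φ = U_Φ J₁ (where Jᵢ are the modular conjugations). Then with Λ_Φ, τ_Φ as in the Stinespring construction and Φ'(Y) = J₁ Φ^♯(J₂YJ₂)J₁, one has Λ_Φ* τ_Φ(Y) Λ_Φ = Φ'(Y) for every Y ∈ M₂'. -/

import Mathlib

open scoped InnerProductSpace ComplexOrder
open ContinuousLinearMap (adjoint)

noncomputable section

/-- Complete positivity of a map `Φ` relative to a subset `M` of operators: matrix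
amplifications preserve positivity, expressed on vectors. -/
def IsCP {H K : Type*} [NormedAddCommGroup H] [InnerProductSpace ℂ H]
    [NormedAddCommGroup K] [InnerProductSpace ℂ K]
    (M : Set (H →L[ℂ] H)) (Φ : (H →L[ℂ] H) →ₗ[ℂ] (K →L[ℂ] K)) : Prop :=
  ∀ (n : ℕ) (B : Fin n → Fin n → (H →L[ℂ] H)),
    (∀ i j, B i j ∈ M) →
    (∀ v : Fin n → H, 0 ≤ ∑ i, ∑ j, ⟪v i, (B i j) (v j)⟫_ℂ) →
    ∀ w : Fin n → K, 0 ≤ ∑ i, ∑ j, ⟪w i, (Φ (B i j)) (w j)⟫_ℂ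

/-- The Stinespring space `L_Φ` of a (completely positive) map `Φ`, defined on the
subset `M` of `B(H)` and taking values in `B(K)`: the separation-completion of the
algebraic tensor product `M ⊗ K` with respect to the semi-inner product
`⟨A ⊗ h, X ⊗ k⟩ = ⟨h, Φ(A* X) k⟩`, presented abstractly as a Hilbert space `L`
together with the bilinear map `emb A h = [A ⊗ h]` having dense span. -/
structure StinespringData {H K : Type*}
    [NormedAddCommGroup H] [InnerProductSpace ℂ H] [CompleteSpace H]
    [NormedAddCommGroup K] [InnerProductSpace ℂ K] [CompleteSpace K]
    (M : Set (H →L[ℂ] H)) (Φ : (H →L[ℂ] H) →ₗ[ℂ] (K →L[ℂ] K))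
    (L : Type*) [NormedAddCommGroup L] [InnerProductSpace ℂ L] [CompleteSpace L] where
  emb : (H →L[ℂ] H) →ₗ[ℂ] K →ₗ[ℂ] L
  inner_emb : ∀ A X : H →L[ℂ] H, A ∈ M → X ∈ M → ∀ h k : K,
    ⟪emb A h, emb X k⟫_ℂ = ⟪h, Φ (star A * X) k⟫_ℂ
  dense_span :
    (Submodule.span ℂ {x : L | ∃ A ∈ M, ∃ h : K, x = emb A h}).topologicalClosure = ⊤
/-- `Ω` is a cyclic vector for the set of operators `M`. -/
def IsCyclicVec {H : Type*} [NormedAddCommGroup H] [InnerProductSpace ℂ H]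
    (M : Set (H →L[ℂ] H)) (Ω : H) : Prop :=
  (Submodule.span ℂ {x : H | ∃ A ∈ M, x = A Ω}).topologicalClosure = ⊤

/-- `Ω` is a separating vector for the set of operators `M`. -/
def IsSeparatingVec {H : Type*} [NormedAddCommGroup H] [InnerProductSpace ℂ H]
    (M : Set (H →L[ℂ] H)) (Ω : H) : Prop :=
  ∀ A ∈ M, A Ω = 0 → A = 0

/-- `Φ` preserves the vector states given by `Ω₁`, `Ω₂` on the algebra `M`. -/
def IsStatePreserving {H K : Type*} [NormedAddCommGroup H] [InnerProductSpace ℂ H]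
    [NormedAddCommGroup K] [InnerProductSpace ℂ K]
    (M : Set (H →L[ℂ] H)) (Ω₁ : H) (Ω₂ : K)
    (Φ : (H →L[ℂ] H) →ₗ[ℂ] (K →L[ℂ] K)) : Prop :=
  ∀ A ∈ M, ⟪Ω₂, Φ A Ω₂⟫_ℂ = ⟪Ω₁, A Ω₁⟫_ℂ
/-- The modular conjugation of a von Neumann algebra `M` in standard form with cyclic and
separating vector `Ω`: an anti-unitary involution `J` fixing `Ω`, together with the induced
conjugation `conj A = J A J` on operators, which exchanges `M` with its commutant `M'` and
acts as the identity on the natural positive cone. -/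
structure ModularConjugation {H : Type*}
    [NormedAddCommGroup H] [InnerProductSpace ℂ H] [CompleteSpace H]
    (M : VonNeumannAlgebra H) (Ω : H) where
  J : H → H
  conj : (H →L[ℂ] H) → (H →L[ℂ] H)
  map_add : ∀ x y, J (x + y) = J x + J y
  map_smul : ∀ (a : ℂ) (x : H), J (a • x) = (starRingEnd ℂ a) • J x
  invol : ∀ x, J (J x) = x
  inner_map : ∀ x y, ⟪J x, J y⟫_ℂ = ⟪y, x⟫_ℂ
  fixΩ : J Ω = Ω
  conj_apply : ∀ (A : H →L[ℂ] H) (x : H), conj A x = J (A (J x))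
  conj_mem : ∀ A ∈ M, conj A ∈ M.commutant
  conj_mem' : ∀ Y ∈ M.commutant, conj Y ∈ M
  fix_cone : ∀ A ∈ M, J ((A * conj A) Ω) = (A * conj A) Ω


section AuxLemmas
open ComplexConjugate

variable {H K : Type*} [NormedAddCommGroup H] [InnerProductSpace ℂ H]
  [NormedAddCommGroup K] [InnerProductSpace ℂ K]

/-- If `Ω` is cyclic for `M` and `v` is orthogonal to all `A Ω`, then `v = 0`. -/
lemma IsCyclicVec.eq_zero [CompleteSpace H] {M : Set (H →L[ℂ] H)} {Ω : H}
    (hcyc : IsCyclicVec M Ω) {v : H}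
    (h : ∀ A ∈ M, ⟪A Ω, v⟫_ℂ = 0) : v = 0 := by
  have h1 : (Submodule.span ℂ {x : H | ∃ A ∈ M, x = A Ω})ᗮ = ⊥ :=
    Submodule.topologicalClosure_eq_top_iff.mp hcyc
  have hv : v ∈ (Submodule.span ℂ {x : H | ∃ A ∈ M, x = A Ω})ᗮ := by
    rw [Submodule.mem_orthogonal]
    intro u hu
    induction hu using Submodule.span_induction with
    | mem x hx => obtain ⟨A, hA, rfl⟩ := hx; exact h A hA
    | zero => simp
    | add x y hx hy ihx ihy => simp [inner_add_left, ihx, ihy]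
    | smul a x hx ih => simp [inner_smul_left, ih]
  rw [h1] at hv
  simpa using hv

/-- A continuous linear map vanishing on `A Ω` for all `A ∈ M`, with `Ω` cyclic, vanishes. -/
lemma IsCyclicVec.clm_eq_zero [CompleteSpace H] {M : Set (H →L[ℂ] H)} {Ω : H}
    (hcyc : IsCyclicVec M Ω) {T : H →L[ℂ] K}
    (h : ∀ A ∈ M, T (A Ω) = 0) : T = 0 := by
  have hker : (Submodule.span ℂ {x : H | ∃ A ∈ M, x = A Ω}).topologicalClosure ≤
      T.ker := by
    apply Submodule.topologicalClosure_minimal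
    · rw [Submodule.span_le]
      rintro x ⟨A, hA, rfl⟩
      exact h A hA
    · exact ContinuousLinearMap.isClosed_ker T
  rw [hcyc] at hker
  ext x
  exact hker (Submodule.mem_top (x := x))

/-- Positivity (n = 1 case of complete positivity). -/
lemma IsCP.pos {M : Set (H →L[ℂ] H)} {Ψ : (H →L[ℂ] H) →ₗ[ℂ] (K →L[ℂ] K)}
    (hCP : IsCP M Ψ) {P : H →L[ℂ] H} (hP : P ∈ M)
    (hpos : ∀ v : H, 0 ≤ ⟪v, P v⟫_ℂ) (w : K) : 0 ≤ ⟪w, Ψ P w⟫_ℂ := by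
  have := hCP 1 (fun _ _ => P) (fun _ _ => hP) (fun v => by simpa using hpos (v 0)) (fun _ => w)
  simpa using this

/-- A (completely) positive map on a von Neumann algebra is star-preserving. -/
lemma IsCP.star_pres [CompleteSpace H] [CompleteSpace K]
    (N : VonNeumannAlgebra H) (Ψ : (H →L[ℂ] H) →ₗ[ℂ] (K →L[ℂ] K))
    (hCP : IsCP (N : Set (H →L[ℂ] H)) Ψ) :
    ∀ B ∈ N, Ψ (star B) = star (Ψ B) := by
  have sa : ∀ S : H →L[ℂ] H, S ∈ N → star S = S → star (Ψ S) = Ψ S := by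
    intro S hS hSsa
    have hSsym : ∀ v : H, conj ⟪v, S v⟫_ℂ = ⟪v, S v⟫_ℂ := by
      intro v
      rw [inner_conj_symm]
      conv_lhs => rw [← hSsa, ContinuousLinearMap.star_eq_adjoint]
      exact ContinuousLinearMap.adjoint_inner_left _ _ _
    set P : H →L[ℂ] H := (‖S‖ : ℂ) • 1 + S with hPdef
    set Q : H →L[ℂ] H := (‖S‖ : ℂ) • 1 - S with hQdef
    have hsmul : (‖S‖ : ℂ) • (1 : H →L[ℂ] H) ∈ N :=
      N.toStarSubalgebra.smul_mem (one_mem _) _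
    have hPmem : P ∈ N := add_mem hsmul hS
    have hQmem : Q ∈ N := sub_mem hsmul hS
    have hbound : ∀ v : H, |(⟪v, S v⟫_ℂ).re| ≤ ‖S‖ * ‖v‖ ^ 2 := by
      intro v
      have h1 : |(⟪v, S v⟫_ℂ).re| ≤ ‖⟪v, S v⟫_ℂ‖ := Complex.abs_re_le_norm _
      have h2 : ‖⟪v, S v⟫_ℂ‖ ≤ ‖v‖ * ‖S v‖ := norm_inner_le_norm _ _
      have h3 : ‖S v‖ ≤ ‖S‖ * ‖v‖ := S.le_opNorm v
      nlinarith [norm_nonneg v, norm_nonneg (S v)]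
    have him : ∀ v : H, (⟪v, S v⟫_ℂ).im = 0 := fun v => Complex.conj_eq_iff_im.mp (hSsym v)
    have hinnerP : ∀ v : H, ⟪v, P v⟫_ℂ = ((‖S‖ * ‖v‖ ^ 2 : ℝ) : ℂ) + ⟪v, S v⟫_ℂ := by
      intro v
      rw [hPdef]
      simp only [ContinuousLinearMap.add_apply, ContinuousLinearMap.smul_apply,
        ContinuousLinearMap.one_apply, inner_add_right, inner_smul_right,
        inner_self_eq_norm_sq_to_K]
      push_cast
      norm_num
    have hinnerQ : ∀ v : H, ⟪v, Q v⟫_ℂ = ((‖S‖ * ‖v‖ ^ 2 : ℝ) : ℂ) - ⟪v, S v⟫_ℂ := by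
      intro v
      rw [hQdef]
      simp only [ContinuousLinearMap.sub_apply, ContinuousLinearMap.smul_apply,
        ContinuousLinearMap.one_apply, inner_sub_right, inner_smul_right,
        inner_self_eq_norm_sq_to_K]
      push_cast
      norm_num
    have hposP : ∀ v : H, 0 ≤ ⟪v, P v⟫_ℂ := by
      intro v
      rw [hinnerP v, Complex.nonneg_iff]
      constructor
      · have := hbound v
        simp only [Complex.add_re, Complex.ofReal_re]
        have := abs_le.mp (hbound v)
        linarith
      · simp only [Complex.add_im, Complex.ofReal_im, him v]
        norm_num
    have hposQ : ∀ v : H, 0 ≤ ⟪v, Q v⟫_ℂ := by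
      intro v
      rw [hinnerQ v, Complex.nonneg_iff]
      constructor
      · simp only [Complex.sub_re, Complex.ofReal_re]
        have := abs_le.mp (hbound v)
        linarith
      · simp only [Complex.sub_im, Complex.ofReal_im, him v]
        norm_num
    have hreal : ∀ w : K, (⟪w, Ψ S w⟫_ℂ).im = 0 := by
      intro w
      have hP0 := (Complex.nonneg_iff.mp (hCP.pos hPmem hposP w)).2
      have hQ0 := (Complex.nonneg_iff.mp (hCP.pos hQmem hposQ w)).2
      have hPQ : Ψ P - Ψ Q = Ψ S + Ψ S := by
        rw [← map_sub, ← map_add]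
        congr 1
        rw [hPdef, hQdef]
        abel
      have h2 : ⟪w, Ψ P w⟫_ℂ - ⟪w, Ψ Q w⟫_ℂ = ⟪w, Ψ S w⟫_ℂ + ⟪w, Ψ S w⟫_ℂ := by
        rw [← inner_sub_right, ← inner_add_right]
        congr 1
        calc (Ψ P) w - (Ψ Q) w = (Ψ P - Ψ Q) w := by simp
          _ = (Ψ S + Ψ S) w := by rw [hPQ]
          _ = (Ψ S) w + (Ψ S) w := by simp
      have h3 := congrArg Complex.im h2
      simp only [Complex.sub_im, Complex.add_im] at h3
      rw [← hP0, ← hQ0] at h3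
      linarith
    have hsym : LinearMap.IsSymmetric ((Ψ S : K →L[ℂ] K) : K →ₗ[ℂ] K) := by
      rw [LinearMap.isSymmetric_iff_inner_map_self_real]
      intro v
      apply Complex.conj_eq_iff_im.mpr
      have h1 : ⟪((Ψ S : K →L[ℂ] K) : K →ₗ[ℂ] K) v, v⟫_ℂ = conj ⟪v, (Ψ S) v⟫_ℂ := by
        rw [ContinuousLinearMap.coe_coe]
        exact (inner_conj_symm _ _).symm
      rw [h1, Complex.conj_im, hreal v, neg_zero]
    exact (ContinuousLinearMap.isSelfAdjoint_iff_isSymmetric.mpr hsym).star_eq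
  intro B hB
  set S₁ := B + star B with hS1
  set S₂ := Complex.I • (B - star B) with hS2
  have hS1mem : S₁ ∈ N := add_mem hB (star_mem hB)
  have hS2mem : S₂ ∈ N := N.toStarSubalgebra.smul_mem (sub_mem hB (star_mem hB)) _
  have hS1sa : star S₁ = S₁ := by
    rw [hS1, star_add, star_star, add_comm]
  have hS2sa : star S₂ = S₂ := by
    rw [hS2, star_smul, star_sub, star_star]
    simp only [RCLike.star_def, Complex.conj_I, neg_smul, smul_sub, neg_sub]
    abel
  have h1 := sa S₁ hS1mem hS1sa
  have h2 := sa S₂ hS2mem hS2sa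
  have hIi : (-(Complex.I) / 2) * Complex.I = (2⁻¹ : ℂ) := by
    rw [div_mul_eq_mul_div, neg_mul, Complex.I_mul_I]
    norm_num
  have hIi' : ((Complex.I) / 2) * Complex.I = (-(2⁻¹) : ℂ) := by
    rw [div_mul_eq_mul_div, Complex.I_mul_I]
    norm_num
  have hBdecomp : B = (2⁻¹ : ℂ) • S₁ + (-(Complex.I) / 2) • S₂ := by
    rw [hS1, hS2, smul_smul, hIi, ← smul_add]
    have : B + star B + (B - star B) = (2 : ℂ) • B := by
      rw [two_smul]; abel
    rw [this, smul_smul]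
    norm_num
  have hstarB : star B = (2⁻¹ : ℂ) • S₁ + ((Complex.I) / 2) • S₂ := by
    rw [hS1, hS2, smul_smul, hIi']
    have : (B + star B) - (B - star B) = (2 : ℂ) • star B := by
      rw [two_smul]; abel
    rw [neg_smul, ← sub_eq_add_neg, ← smul_sub, this, smul_smul]
    norm_num
  have e1 : star (2⁻¹ : ℂ) = 2⁻¹ := by simp
  have e2 : star (-(Complex.I) / 2 : ℂ) = Complex.I / 2 := by simp
  rw [hstarB]
  conv_rhs => rw [hBdecomp]
  simp only [map_add, map_smul, star_add, star_smul, h1, h2, e1, e2]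

end AuxLemmas

/-- For a Markov map `Φ` with adjoint `Φ^♯` and `J₂ U_Φ = U_Φ J₁`,
one has `Λ_Φ* τ_Φ(Y) Λ_Φ = Φ'(Y) = J₁ Φ^♯(J₂ Y J₂) J₁` for every `Y ∈ M₂'`. -/
theorem stmt10
    {H₁ H₂ : Type*} [NormedAddCommGroup H₁] [InnerProductSpace ℂ H₁] [CompleteSpace H₁]
    [NormedAddCommGroup H₂] [InnerProductSpace ℂ H₂] [CompleteSpace H₂]
    (M₁ : VonNeumannAlgebra H₁) (M₂ : VonNeumannAlgebra H₂) (Ω₁ : H₁) (Ω₂ : H₂)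
    (hΩ₁ : ‖Ω₁‖ = 1) (hΩ₂ : ‖Ω₂‖ = 1)
    (hcyc₁ : IsCyclicVec (M₁ : Set (H₁ →L[ℂ] H₁)) Ω₁)
    (hsep₁ : IsSeparatingVec (M₁ : Set (H₁ →L[ℂ] H₁)) Ω₁)
    (hcyc₂ : IsCyclicVec (M₂ : Set (H₂ →L[ℂ] H₂)) Ω₂)
    (hsep₂ : IsSeparatingVec (M₂ : Set (H₂ →L[ℂ] H₂)) Ω₂)
    (J₁ : ModularConjugation M₁ Ω₁) (J₂ : ModularConjugation M₂ Ω₂)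
    (Φ : (H₁ →L[ℂ] H₁) →ₗ[ℂ] (H₂ →L[ℂ] H₂))
    (hmem : ∀ A ∈ M₁, Φ A ∈ M₂) (hunital : Φ 1 = 1)
    (hCP : IsCP (M₁ : Set (H₁ →L[ℂ] H₁)) Φ)
    (hstate : IsStatePreserving (M₁ : Set (H₁ →L[ℂ] H₁)) Ω₁ Ω₂ Φ)
    (Φs : (H₂ →L[ℂ] H₂) →ₗ[ℂ] (H₁ →L[ℂ] H₁))
    (hmems : ∀ B ∈ M₂, Φs B ∈ M₁) (hunitals : Φs 1 = 1)
    (hCPs : IsCP (M₂ : Set (H₂ →L[ℂ] H₂)) Φs)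
    (hstates : IsStatePreserving (M₂ : Set (H₂ →L[ℂ] H₂)) Ω₂ Ω₁ Φs)
    (hadj : ∀ A ∈ M₁, ∀ B ∈ M₂, ⟪Ω₂, B (Φ A Ω₂)⟫_ℂ = ⟪Ω₁, Φs B (A Ω₁)⟫_ℂ)
    (U : H₁ →L[ℂ] H₂) (hU : ∀ A ∈ M₁, U (A Ω₁) = Φ A Ω₂)
    (hJU : ∀ x : H₁, J₂.J (U x) = U (J₁.J x))
    (L : Type*) [NormedAddCommGroup L] [InnerProductSpace ℂ L] [CompleteSpace L]
    (S : StinespringData (M₁ : Set (H₁ →L[ℂ] H₁)) Φ L)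
    (τ : (H₂ →L[ℂ] H₂) → (L →L[ℂ] L))
    (hτ : ∀ Y ∈ M₂.commutant, ∀ A ∈ M₁, ∀ h : H₂, τ Y (S.emb A h) = S.emb A (Y h))
    (Λ : H₁ →L[ℂ] L) (hΛ : ∀ A ∈ M₁, Λ (A Ω₁) = S.emb A Ω₂) :
    ∀ Y ∈ M₂.commutant,
      adjoint Λ ∘L τ Y ∘L Λ = J₁.conj (Φs (J₂.conj Y)) := by
  intro Y hY
  set Y' := J₂.conj Y with hY'def
  have hY'mem : Y' ∈ M₂ := J₂.conj_mem' Y hY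
  have starΦ : ∀ A ∈ M₁, Φ (star A) = star (Φ A) := IsCP.star_pres M₁ Φ hCP
  have starΦs : ∀ B ∈ M₂, Φs (star B) = star (Φs B) := IsCP.star_pres M₂ Φs hCPs
  -- Φ^♯(B) Ω₁ = U* (B Ω₂) for B ∈ M₂
  have hkey : ∀ B, B ∈ M₂ → Φs B Ω₁ = adjoint U (B Ω₂) := by
    intro B hB
    have hzero : ∀ A ∈ (M₁ : Set (H₁ →L[ℂ] H₁)),
        ⟪A Ω₁, Φs B Ω₁ - adjoint U (B Ω₂)⟫_ℂ = 0 := by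
      intro A hA
      rw [inner_sub_right, sub_eq_zero]
      calc ⟪A Ω₁, Φs B Ω₁⟫_ℂ
          = ⟪adjoint (Φs B) (A Ω₁), Ω₁⟫_ℂ :=
            (ContinuousLinearMap.adjoint_inner_left _ _ _).symm
        _ = ⟪Φs (star B) (A Ω₁), Ω₁⟫_ℂ := by
            rw [← ContinuousLinearMap.star_eq_adjoint, ← starΦs B hB]
        _ = (starRingEnd ℂ) ⟪Ω₁, Φs (star B) (A Ω₁)⟫_ℂ := (inner_conj_symm _ _).symm
        _ = (starRingEnd ℂ) ⟪Ω₂, (star B) ((Φ A) Ω₂)⟫_ℂ := by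
            rw [hadj A hA (star B) (star_mem hB)]
        _ = ⟪(star B) ((Φ A) Ω₂), Ω₂⟫_ℂ := inner_conj_symm _ _
        _ = ⟪adjoint B ((Φ A) Ω₂), Ω₂⟫_ℂ := by rw [ContinuousLinearMap.star_eq_adjoint]
        _ = ⟪(Φ A) Ω₂, B Ω₂⟫_ℂ := ContinuousLinearMap.adjoint_inner_left _ _ _
        _ = ⟪U (A Ω₁), B Ω₂⟫_ℂ := by rw [hU A hA]
        _ = ⟪A Ω₁, adjoint U (B Ω₂)⟫_ℂ :=
            (ContinuousLinearMap.adjoint_inner_right _ _ _).symm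
    exact sub_eq_zero.mp (hcyc₁.eq_zero hzero)
  -- U* J₂ = J₁ U*
  have hUJ : ∀ w : H₂, adjoint U (J₂.J w) = J₁.J (adjoint U w) := by
    intro w
    apply ext_inner_left ℂ
    intro v
    calc ⟪v, adjoint U (J₂.J w)⟫_ℂ
        = ⟪U v, J₂.J w⟫_ℂ := ContinuousLinearMap.adjoint_inner_right _ _ _
      _ = ⟪J₂.J (J₂.J (U v)), J₂.J w⟫_ℂ := by rw [J₂.invol]
      _ = ⟪w, J₂.J (U v)⟫_ℂ := J₂.inner_map _ _
      _ = ⟪w, U (J₁.J v)⟫_ℂ := by rw [hJU]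
      _ = ⟪adjoint U w, J₁.J v⟫_ℂ := (ContinuousLinearMap.adjoint_inner_left _ _ _).symm
      _ = ⟪J₁.J (J₁.J (adjoint U w)), J₁.J v⟫_ℂ := by rw [J₁.invol]
      _ = ⟪v, J₁.J (adjoint U w)⟫_ℂ := J₁.inner_map _ _
  have hYΩ : J₂.J (Y' Ω₂) = Y Ω₂ := by
    rw [hY'def, J₂.conj_apply, J₂.fixΩ, J₂.invol]
  -- main inner product identity
  have main : ∀ C ∈ (M₁ : Set (H₁ →L[ℂ] H₁)), ∀ A ∈ (M₁ : Set (H₁ →L[ℂ] H₁)),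
      ⟪A Ω₁, adjoint Λ (τ Y (Λ (C Ω₁)))⟫_ℂ = ⟪A Ω₁, J₁.conj (Φs Y') (C Ω₁)⟫_ℂ := by
    intro C hC A hA
    have hD : star A * C ∈ M₁ := mul_mem (star_mem hA) hC
    have hlhs : ⟪A Ω₁, adjoint Λ (τ Y (Λ (C Ω₁)))⟫_ℂ = ⟪Ω₂, Φ (star A * C) (Y Ω₂)⟫_ℂ := by
      calc ⟪A Ω₁, adjoint Λ (τ Y (Λ (C Ω₁)))⟫_ℂ
          = ⟪Λ (A Ω₁), τ Y (Λ (C Ω₁))⟫_ℂ := ContinuousLinearMap.adjoint_inner_right _ _ _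
        _ = ⟪S.emb A Ω₂, τ Y (S.emb C Ω₂)⟫_ℂ := by rw [hΛ A hA, hΛ C hC]
        _ = ⟪S.emb A Ω₂, S.emb C (Y Ω₂)⟫_ℂ := by rw [hτ Y hY C hC Ω₂]
        _ = ⟪Ω₂, Φ (star A * C) (Y Ω₂)⟫_ℂ := S.inner_emb A C hA hC Ω₂ (Y Ω₂)
    have hrhs : ⟪A Ω₁, J₁.conj (Φs Y') (C Ω₁)⟫_ℂ = ⟪Ω₂, Φ (star A * C) (Y Ω₂)⟫_ℂ := by
      calc ⟪A Ω₁, J₁.conj (Φs Y') (C Ω₁)⟫_ℂ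
          = ⟪A Ω₁, J₁.J ((Φs Y') (J₁.J (C Ω₁)))⟫_ℂ := by rw [J₁.conj_apply]
        _ = ⟪J₁.J (J₁.J (A Ω₁)), J₁.J ((Φs Y') (J₁.J (C Ω₁)))⟫_ℂ := by rw [J₁.invol]
        _ = ⟪(Φs Y') (J₁.J (C Ω₁)), J₁.J (A Ω₁)⟫_ℂ := J₁.inner_map _ _
        _ = ⟪(Φs Y') (J₁.conj C Ω₁), J₁.J (A Ω₁)⟫_ℂ := by
            rw [J₁.conj_apply, J₁.fixΩ]
        _ = ⟪J₁.conj C ((Φs Y') Ω₁), J₁.J (A Ω₁)⟫_ℂ := by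
            have hcomm : (Φs Y') * (J₁.conj C) = (J₁.conj C) * (Φs Y') :=
              (VonNeumannAlgebra.mem_commutant_iff.mp (J₁.conj_mem C hC)) _ (hmems Y' hY'mem)
            have happ := congrArg (fun T : H₁ →L[ℂ] H₁ => T Ω₁) hcomm
            have happ' : (Φs Y') ((J₁.conj C) Ω₁) = (J₁.conj C) ((Φs Y') Ω₁) := by
              simpa [ContinuousLinearMap.mul_apply] using happ
            rw [happ']
        _ = ⟪J₁.conj C (adjoint U (Y' Ω₂)), J₁.J (A Ω₁)⟫_ℂ := by rw [hkey Y' hY'mem]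
        _ = ⟪J₁.J (C (J₁.J (adjoint U (Y' Ω₂)))), J₁.J (A Ω₁)⟫_ℂ := by rw [J₁.conj_apply]
        _ = ⟪A Ω₁, C (J₁.J (adjoint U (Y' Ω₂)))⟫_ℂ := J₁.inner_map _ _
        _ = ⟪A Ω₁, C (adjoint U (J₂.J (Y' Ω₂)))⟫_ℂ := by rw [hUJ]
        _ = ⟪A Ω₁, C (adjoint U (Y Ω₂))⟫_ℂ := by rw [hYΩ]
        _ = ⟪adjoint C (A Ω₁), adjoint U (Y Ω₂)⟫_ℂ :=
            (ContinuousLinearMap.adjoint_inner_left _ _ _).symm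
        _ = ⟪U (adjoint C (A Ω₁)), Y Ω₂⟫_ℂ := ContinuousLinearMap.adjoint_inner_right _ _ _
        _ = ⟪U ((star (star A * C)) Ω₁), Y Ω₂⟫_ℂ := by
            congr 1
            rw [star_mul, star_star]
            rw [ContinuousLinearMap.mul_apply, ContinuousLinearMap.star_eq_adjoint]
        _ = ⟪Φ (star (star A * C)) Ω₂, Y Ω₂⟫_ℂ := by rw [hU _ (star_mem hD)]
        _ = ⟪Ω₂, adjoint (Φ (star (star A * C))) (Y Ω₂)⟫_ℂ :=
            (ContinuousLinearMap.adjoint_inner_right _ _ _).symm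
        _ = ⟪Ω₂, Φ (star A * C) (Y Ω₂)⟫_ℂ := by
            rw [← ContinuousLinearMap.star_eq_adjoint, ← starΦ _ (star_mem hD), star_star]
    rw [hlhs, hrhs]
  -- conclude operator equality
  have hTzero : (adjoint Λ ∘L τ Y ∘L Λ) - J₁.conj (Φs Y') = 0 := by
    apply hcyc₁.clm_eq_zero
    intro C hC
    apply hcyc₁.eq_zero
    intro A hA
    rw [ContinuousLinearMap.sub_apply, ContinuousLinearMap.comp_apply,
      ContinuousLinearMap.comp_apply, inner_sub_right, sub_eq_zero]
    exact main C hC A hA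
  have := sub_eq_zero.mp hTzero
  rw [this]
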